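/- Let μ be a Borel probability measure on ℝ with finite moments of all orders and (Pₙ) a monic orthogonal polynomial system for μ with Jacobi parameters (βₙ)ₙ≥0, (γₙ)ₙ≥1. If for every n ≥ 1 and every x ∈ ℝ one has ∫ ΔPₙ(x, y) dμ(y) = P_{n−1}(x), then the Jacobi parameter sequences are constant: βₙ = β₀ for all n ≥ 0 and γₙ = γ₁ for all n ≥ 1. (In particular, if μ has mean 0 and variance 1, then βₙ = 0 and γₙ = 1 for all n, so the Pₙ are the monic Chebyshev polynomials of the second kind: the semicircle law is the unique fixed point.) -/

import Mathlib

open MeasureTheory Polynomial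

/-- A monic orthogonal polynomial system for `μ` with Jacobi parameters
`(βₙ)ₙ≥0`, `(γₙ)ₙ≥1`. -/
def IsMOPS (μ : Measure ℝ) (P : ℕ → Polynomial ℝ) (β γ : ℕ → ℝ) : Prop :=
  P 0 = 1 ∧ (∀ n, (P n).Monic) ∧ (∀ n, (P n).natDegree = n) ∧
    (X * P 0 = P 1 + C (β 0) * P 0) ∧
    (∀ n, 1 ≤ n → X * P n = P (n + 1) + C (β n) * P n + C (γ n) * P (n - 1)) ∧
    (∀ n m, n ≠ m → ∫ x, (P n).eval x * (P m).eval x ∂μ = 0)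

noncomputable def ddiff (Q : Polynomial ℝ) : MvPolynomial (Fin 2) ℝ :=
  ∑ k ∈ Finset.range (Q.natDegree + 1), MvPolynomial.C (Q.coeff k) *
    ∑ i ∈ Finset.range k, MvPolynomial.X 0 ^ i * MvPolynomial.X 1 ^ (k - 1 - i)

lemma ddiff_spec (Q : Polynomial ℝ) :
    (MvPolynomial.X 0 - MvPolynomial.X 1) * ddiff Q =
      Polynomial.aeval (MvPolynomial.X 0) Q - Polynomial.aeval (MvPolynomial.X 1) Q := by
  rw [ddiff, Finset.mul_sum, Polynomial.aeval_eq_sum_range (MvPolynomial.X 0),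
    Polynomial.aeval_eq_sum_range (MvPolynomial.X 1), ← Finset.sum_sub_distrib]
  refine Finset.sum_congr rfl fun k _ => ?_
  rw [MvPolynomial.smul_eq_C_mul, MvPolynomial.smul_eq_C_mul]
  linear_combination (MvPolynomial.C (Q.coeff k)) *
    geom_sum₂_mul (MvPolynomial.X 0 : MvPolynomial (Fin 2) ℝ) (MvPolynomial.X 1) k

lemma ddiff_one : ddiff 1 = 0 := by
  simp [ddiff]

lemma eval_aeval_X (v : Fin 2 → ℝ) (i : Fin 2) (Q : Polynomial ℝ) :
    MvPolynomial.eval v (Polynomial.aeval (MvPolynomial.X i) Q) = Q.eval (v i) := by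
  induction Q using Polynomial.induction_on with
  | C a => simp
  | add p q hp hq => simp [hp, hq]
  | monomial n a hp => simp_all

lemma to1_eval (x y : ℝ) (D : MvPolynomial (Fin 2) ℝ) :
    (MvPolynomial.aeval ![Polynomial.C x, Polynomial.X] D).eval y =
      MvPolynomial.eval ![x, y] D := by
  induction D using MvPolynomial.induction_on with
  | C a => simp
  | add p q hp hq => simp [hp, hq]
  | mul_X p i hp => fin_cases i <;> simp [hp]

lemma integrable_polyeval (μ : Measure ℝ) (hμmom : ∀ n : ℕ, Integrable (fun x => x ^ n) μ)
    (Q : Polynomial ℝ) : Integrable (fun y => Q.eval y) μ := by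
  have : (fun y => Q.eval y)
      = fun y => ∑ i ∈ Finset.range (Q.natDegree + 1), Q.coeff i * y ^ i := by
    funext y; rw [Polynomial.eval_eq_sum_range]
  rw [this]
  exact integrable_finset_sum _ fun i _ => (hμmom i).const_mul _

lemma integrable_mv (μ : Measure ℝ) (hμmom : ∀ n : ℕ, Integrable (fun x => x ^ n) μ)
    (x : ℝ) (D : MvPolynomial (Fin 2) ℝ) :
    Integrable (fun y => MvPolynomial.eval ![x, y] D) μ := by
  have : (fun y => MvPolynomial.eval ![x, y] D) =
      fun y => (MvPolynomial.aeval ![Polynomial.C x, Polynomial.X] D).eval y := by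
    funext y; rw [to1_eval]
  rw [this]; exact integrable_polyeval μ hμmom _

lemma integrable_mv_mul (μ : Measure ℝ) (hμmom : ∀ n : ℕ, Integrable (fun x => x ^ n) μ)
    (x : ℝ) (D : MvPolynomial (Fin 2) ℝ) :
    Integrable (fun y => y * MvPolynomial.eval ![x, y] D) μ := by
  have : (fun y => y * MvPolynomial.eval ![x, y] D) =
      fun y => (Polynomial.X * MvPolynomial.aeval ![Polynomial.C x, Polynomial.X] D).eval y := by
    funext y; rw [Polynomial.eval_mul, Polynomial.eval_X, to1_eval]
  rw [this]; exact integrable_polyeval μ hμmom _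

lemma ddiff_pointwise (x y : ℝ) (Q : Polynomial ℝ) :
    (x - y) * MvPolynomial.eval ![x, y] (ddiff Q) = Q.eval x - Q.eval y := by
  have := congrArg (MvPolynomial.eval ![x, y]) (ddiff_spec Q)
  simpa [eval_aeval_X] using this

lemma X_sub_X_ne : (MvPolynomial.X 0 - MvPolynomial.X 1 : MvPolynomial (Fin 2) ℝ) ≠ 0 := by
  intro hc
  have := congrArg (MvPolynomial.eval ![(1:ℝ), 0]) hc
  simp at this

lemma ddiff_rec (Pk Pk1 Pkm : Polynomial ℝ) (b g : ℝ)
    (hrec : X * Pk = Pk1 + C b * Pk + C g * Pkm) :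
    ddiff Pk1 = Polynomial.aeval (MvPolynomial.X 0) Pk +
      (MvPolynomial.X 1 - MvPolynomial.C b) * ddiff Pk - MvPolynomial.C g * ddiff Pkm := by
  apply mul_left_cancel₀ X_sub_X_ne
  have h0 := congrArg (Polynomial.aeval (MvPolynomial.X (0 : Fin 2) : MvPolynomial (Fin 2) ℝ)) hrec
  have h1 := congrArg (Polynomial.aeval (MvPolynomial.X (1 : Fin 2) : MvPolynomial (Fin 2) ℝ)) hrec
  simp only [map_add, map_mul, Polynomial.aeval_X, Polynomial.aeval_C,
    MvPolynomial.algebraMap_eq] at h0 h1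
  have s0 := ddiff_spec Pk1
  have s1 := ddiff_spec Pk
  have s2 := ddiff_spec Pkm
  linear_combination s0 - h0 + h1 - (MvPolynomial.X 1 - MvPolynomial.C b) * s1 +
    MvPolynomial.C g * s2

theorem fixed_point_of_stripping_has_constant_jacobi (μ : Measure ℝ) [IsProbabilityMeasure μ]
    (hμmom : ∀ n : ℕ, Integrable (fun x => x ^ n) μ)
    (P : ℕ → Polynomial ℝ) (β γ : ℕ → ℝ) (hP : IsMOPS μ P β γ)
    (h : ∀ n, 1 ≤ n → ∀ x : ℝ, ∀ D : MvPolynomial (Fin 2) ℝ,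
      (MvPolynomial.X 0 - MvPolynomial.X 1) * D =
        Polynomial.aeval (MvPolynomial.X 0) (P n) - Polynomial.aeval (MvPolynomial.X 1) (P n) →
      ∫ y, MvPolynomial.eval ![x, y] D ∂μ = (P (n - 1)).eval x) :
    (∀ n, β n = β 0) ∧ (∀ n, 1 ≤ n → γ n = γ 1) := by
  obtain ⟨hP0, hmon, hdeg, hrec0, hrec, horth⟩ := hP
  -- mean-zero of P n for n ≥ 1
  have hzero : ∀ n, 1 ≤ n → ∫ y, (P n).eval y ∂μ = 0 := by
    intro n hn
    have := horth n 0 (by omega)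
    simpa [hP0] using this
  -- A: the stripping hypothesis applied to ddiff
  have A : ∀ n, 1 ≤ n → ∀ x : ℝ,
      ∫ y, MvPolynomial.eval ![x, y] (ddiff (P n)) ∂μ = (P (n - 1)).eval x :=
    fun n hn x => h n hn x (ddiff (P n)) (ddiff_spec (P n))
  -- B: first-moment version
  have B : ∀ n, 1 ≤ n → ∀ x : ℝ,
      ∫ y, y * MvPolynomial.eval ![x, y] (ddiff (P n)) ∂μ
        = x * (P (n - 1)).eval x - (P n).eval x := by
    intro n hn x
    have hfun : (fun y => y * MvPolynomial.eval ![x, y] (ddiff (P n)))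
        = fun y => x * MvPolynomial.eval ![x, y] (ddiff (P n))
            - ((P n).eval x - (P n).eval y) := by
      funext y
      have := ddiff_pointwise x y (P n)
      linear_combination -this
    have i1 : Integrable (fun y => x * MvPolynomial.eval ![x, y] (ddiff (P n))) μ :=
      (integrable_mv μ hμmom x _).const_mul x
    have i2 : Integrable (fun y => (P n).eval x - (P n).eval y) μ :=
      (integrable_const ((P n).eval x)).sub (integrable_polyeval μ hμmom (P n))
    have i3 : Integrable (fun _ : ℝ => (P n).eval x) μ := integrable_const _
    rw [hfun, integral_sub i1 i2, integral_const_mul, A n hn x,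
      integral_sub i3 (integrable_polyeval μ hμmom (P n)), hzero n hn, integral_const]
    simp
  -- master identity
  have master : ∀ k, 1 ≤ k → ∀ x : ℝ,
      x * (P (k - 1)).eval x = (P k).eval x + β k * (P (k - 1)).eval x
        + γ k * ∫ y, MvPolynomial.eval ![x, y] (ddiff (P (k - 1))) ∂μ := by
    intro k hk x
    have hA := A (k + 1) (by omega) x
    simp only [Nat.add_sub_cancel] at hA
    rw [ddiff_rec (P k) (P (k + 1)) (P (k - 1)) (β k) (γ k) (hrec k hk)] at hA
    have hfun : (fun y => MvPolynomial.eval ![x, y]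
        (Polynomial.aeval (MvPolynomial.X 0) (P k) +
          (MvPolynomial.X 1 - MvPolynomial.C (β k)) * ddiff (P k) -
          MvPolynomial.C (γ k) * ddiff (P (k - 1))))
        = fun y => ((P k).eval x + (y * MvPolynomial.eval ![x, y] (ddiff (P k))
            - β k * MvPolynomial.eval ![x, y] (ddiff (P k))))
            - γ k * MvPolynomial.eval ![x, y] (ddiff (P (k - 1))) := by
      funext y
      simp [eval_aeval_X]
      ring
    have i1 : Integrable (fun y => y * MvPolynomial.eval ![x, y] (ddiff (P k))
        - β k * MvPolynomial.eval ![x, y] (ddiff (P k))) μ :=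
      (integrable_mv_mul μ hμmom x _).sub ((integrable_mv μ hμmom x _).const_mul _)
    have i0 : Integrable (fun _ : ℝ => (P k).eval x) μ := integrable_const _
    have i2 : Integrable (fun y => (P k).eval x + (y * MvPolynomial.eval ![x, y] (ddiff (P k))
        - β k * MvPolynomial.eval ![x, y] (ddiff (P k)))) μ := i0.add i1
    have i3 : Integrable (fun y => γ k * MvPolynomial.eval ![x, y] (ddiff (P (k - 1)))) μ :=
      (integrable_mv μ hμmom x _).const_mul _
    rw [hfun, integral_sub i2 i3, integral_add i0 i1,
      integral_sub (integrable_mv_mul μ hμmom x _) ((integrable_mv μ hμmom x _).const_mul _),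
      integral_const_mul, integral_const_mul, B k hk x, A k hk x, integral_const] at hA
    simp only [measure_univ, ENNReal.toReal_one, probReal_univ, smul_eq_mul, one_mul] at hA
    linarith
  -- β 1 = β 0
  have hβ1 : β 1 = β 0 := by
    have hm := master 1 (by omega) 0
    simp only [Nat.sub_self, hP0, Polynomial.eval_one, mul_one, ddiff_one] at hm
    have hP1 : P 1 = X - C (β 0) := by
      have := hrec0
      rw [hP0, mul_one, mul_one] at this
      linear_combination -this
    rw [hP1] at hm
    simp at hm
    linarith
  -- step for k ≥ 2
  have step : ∀ k, 2 ≤ k → β k = β (k - 1) ∧ γ k = γ (k - 1) := by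
    intro k hk
    have hm := master k (by omega)
    have hAm : ∀ x : ℝ, ∫ y, MvPolynomial.eval ![x, y] (ddiff (P (k - 1))) ∂μ
        = (P (k - 2)).eval x := by
      intro x
      have := A (k - 1) (by omega) x
      have e : k - 1 - 1 = k - 2 := by omega
      rwa [e] at this
    have hr := hrec (k - 1) (by omega)
    have e1 : k - 1 + 1 = k := by omega
    have e2 : k - 1 - 1 = k - 2 := by omega
    rw [e1, e2] at hr
    -- polynomial identity
    have peq : C (β k - β (k - 1)) * P (k - 1) + C (γ k - γ (k - 1)) * P (k - 2) = 0 := by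
      apply Polynomial.funext
      intro x
      have h1 := hm x
      rw [hAm x] at h1
      have h2 := congrArg (Polynomial.eval x) hr
      simp only [Polynomial.eval_mul, Polynomial.eval_add, Polynomial.eval_X,
        Polynomial.eval_C] at h2
      simp only [Polynomial.eval_add, Polynomial.eval_mul, Polynomial.eval_C,
        Polynomial.eval_zero]
      linarith
    have hcoeff := congrArg (fun p => Polynomial.coeff p (k - 1)) peq
    have hc1 : (P (k - 1)).coeff (k - 1) = 1 := by
      have := (hmon (k - 1)).coeff_natDegree
      rwa [hdeg] at this
    have hc2 : (P (k - 2)).coeff (k - 1) = 0 := by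
      apply Polynomial.coeff_eq_zero_of_natDegree_lt
      rw [hdeg]; omega
    simp only [Polynomial.coeff_add, Polynomial.coeff_C_mul, hc1, hc2, mul_one, mul_zero,
      add_zero, Polynomial.coeff_zero] at hcoeff
    have hβ : β k = β (k - 1) := by linarith
    refine ⟨hβ, ?_⟩
    rw [hβ, sub_self, map_zero, zero_mul, zero_add] at peq
    rcases mul_eq_zero.mp peq with hC | hp
    · have := Polynomial.C_eq_zero.mp hC
      linarith
    · exact absurd hp (hmon (k - 2)).ne_zero
  constructor
  · intro n
    induction n with
    | zero => rfl
    | succ m ih =>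
      rcases Nat.eq_zero_or_pos m with hm | hm
      · subst hm; exact hβ1
      · have := (step (m + 1) (by omega)).1
        simpa using this.trans ih
  · intro n hn
    induction n with
    | zero => omega
    | succ m ih =>
      rcases Nat.eq_zero_or_pos m with hm | hm
      · subst hm; rfl
      · have := (step (m + 1) (by omega)).2
        simp only [Nat.add_sub_cancel] at this
        exact this.trans (ih hm)
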